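/- Suppose m ≡ 2 (mod 4) and j ∈ J. Then α_j(n) is an integer, C_{j_k}(α_j(k)) ≠ 0 for all 1 ≤ k ≤ n − 1, and: (i) if α_j(n) < 0 then P(j) ≠ 0 and V(j) = v(j) − c(j_n, −α_j(n) − 1); (ii) if 0 ≤ α_j(n) < j_n then P(j) = 0; (iii) if α_j(n) ≥ j_n then P(j) ≠ 0 and V(j) = v(j) − c(j_n, α_j(n) − j_n). -/

import Mathlib

open Finset

/-- `s a` is the sum of the binary digits of `a`. -/
def sdig (a : ℕ) : ℕ := (Nat.digits 2 a).sum

/-- `carries a b` is the number of carries when adding `a` and `b` in base 2: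
`c(a,b) = s(a) + s(b) - s(a+b)`. -/
def carries (a b : ℕ) : ℕ := sdig a + sdig b - sdig (a + b)

/-- The generalized binomial coefficient `C_r(x) = x(x-1)⋯(x-r+1)/r!` (with `C_0(x) = 1`). -/
def genBinom (x : ℚ) (r : ℕ) : ℚ :=
  (∏ p ∈ Finset.range r, (x - p)) / (Nat.factorial r : ℚ)

/-- Membership in the index set `J`: here `j i` (for `i : Fin n`) is the paper's
`j_{i+1}`, so the defining relation `(2^n-1)j_1 + ⋯ + (2-1)j_n = m+1` becomes
`∑ k, (2^(n-k) - 1) * j k = m + 1`. -/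
def inJ (n m : ℕ) (j : Fin n → ℕ) : Prop :=
  ∑ k : Fin n, (2 ^ (n - (k : ℕ)) - 1) * j k = m + 1

/-- `α_j(k)`: for `K : Fin n`, `alphaF n m j K` is the paper's `α_j(K+1)`, i.e.
`m / 2^(n-K) - ∑_{I < K} 2^(K-I) j_{I+1}`. -/
def alphaF (n m : ℕ) (j : Fin n → ℕ) (K : Fin n) : ℚ :=
  (m : ℚ) / 2 ^ (n - (K : ℕ)) -
    ∑ I : Fin n, if (I : ℕ) < (K : ℕ) then 2 ^ ((K : ℕ) - (I : ℕ)) * (j I : ℚ) else 0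

/-- `P(j) = ∏_{k=1}^n C_{j_k}(α_j(k))`. -/
def Pprod (n m : ℕ) (j : Fin n → ℕ) : ℚ :=
  ∏ k : Fin n, genBinom (alphaF n m j k) (j k)

/-- `V(j) = -ν(P(j))`, where `ν` is the 2-adic valuation on `ℚ`. -/
def V (n m : ℕ) (j : Fin n → ℕ) : ℤ := - padicValRat 2 (Pprod n m j)

/-- `v(j) = ∑_{k=1}^{n-1} ((n-k+1) j_k - s(j_k))` (the case `ν(m) = 1`). -/
def vsum (n : ℕ) (j : Fin n → ℕ) : ℤ :=
  ∑ k : Fin n, if (k : ℕ) < n - 1 then ((n : ℤ) - (k : ℕ)) * j k - sdig (j k) else 0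

lemma padicValRat_prod {ι : Type*} (s : Finset ι) (f : ι → ℚ) (hf : ∀ i ∈ s, f i ≠ 0) :
    padicValRat 2 (∏ i ∈ s, f i) = ∑ i ∈ s, padicValRat 2 (f i) := by
  induction s using Finset.cons_induction with
  | empty => simp
  | cons a s ha ih =>
    rw [Finset.prod_cons, Finset.sum_cons,
      padicValRat.mul (hf a (mem_cons_self a s))
        (Finset.prod_ne_zero_iff.2 fun i hi => hf i (mem_cons_of_mem hi)),
      ih (fun i hi => hf i (mem_cons_of_mem hi))]

lemma sdig_le (r : ℕ) : sdig r ≤ r := Nat.digit_sum_le 2 r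

lemma padicValNat_factorial_eq (r : ℕ) : padicValNat 2 r.factorial = r - sdig r := by
  have := sub_one_mul_padicValNat_factorial (p := 2) r
  simpa [sdig] using this

lemma val_choose (a r : ℕ) : padicValNat 2 ((a + r).choose r) = carries r a := by
  have h1 : (a + r).choose r * r.factorial * a.factorial = (a + r).factorial := by
    have := Nat.choose_mul_factorial_mul_factorial (Nat.le_add_left r a)
    simpa using this
  have h5 : padicValNat 2 ((a + r).choose r) + padicValNat 2 r.factorial
      + padicValNat 2 a.factorial = padicValNat 2 (a + r).factorial := by
    rw [← padicValNat.mul (Nat.choose_pos (Nat.le_add_left r a)).ne' r.factorial_ne_zero,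
      ← padicValNat.mul (Nat.mul_ne_zero (Nat.choose_pos (Nat.le_add_left r a)).ne' r.factorial_ne_zero) a.factorial_ne_zero, h1]
  rw [padicValNat_factorial_eq, padicValNat_factorial_eq, padicValNat_factorial_eq] at h5
  have e1 := sdig_le r
  have e2 := sdig_le a
  have e3 := sdig_le (a + r)
  have e4 : sdig (r + a) = sdig (a + r) := by rw [Nat.add_comm]
  simp only [carries]
  omega

lemma odd_div_pow_ne_zero (q : ℤ) (hq : q % 2 = 1) (e : ℕ) : (q : ℚ) / 2 ^ e ≠ 0 := by
  have hq0 : q ≠ 0 := by omega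
  have h2 : ((2:ℚ) ^ e) ≠ 0 := by positivity
  exact div_ne_zero (Int.cast_ne_zero.2 hq0) h2

lemma odd_div_pow_val (q : ℤ) (hq : q % 2 = 1) (e : ℕ) :
    padicValRat 2 ((q : ℚ) / 2 ^ e) = -(e : ℤ) := by
  have hq0 : q ≠ 0 := by omega
  have h2 : ((2:ℚ) ^ e) ≠ 0 := by positivity
  rw [padicValRat.div (Int.cast_ne_zero.2 hq0) h2, padicValRat.of_int,
    padicValRat.pow (q := 2)]
  have h1 : padicValInt 2 q = 0 := by
    unfold padicValInt
    apply padicValNat.eq_zero_of_not_dvd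
    rw [← Int.natAbs_natCast 2, Int.natAbs_dvd_natAbs]
    omega
  have h3 : padicValRat 2 (2 : ℚ) = 1 := by
    simpa using padicValRat.self (p := 2) (by norm_num)
  rw [h1, h3]
  ring

lemma prod_sub_cast (a r : ℕ) :
    (∏ p ∈ Finset.range r, ((a : ℚ) - p)) = a.descFactorial r := by
  induction r with
  | zero => simp
  | succ r ih =>
    rw [Finset.prod_range_succ, ih, Nat.descFactorial_succ, Nat.cast_mul]
    rcases lt_or_ge r a with h | h
    · rw [Nat.cast_sub h.le]
      ring
    · rcases eq_or_lt_of_le h with h' | h'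
      · subst h'; simp
      · rw [Nat.descFactorial_eq_zero_iff_lt.2 h']
        simp

lemma prod_add_cast (a r : ℕ) :
    (∏ p ∈ Finset.range r, ((a : ℚ) + 1 + p)) = (a + r).descFactorial r := by
  induction r with
  | zero => simp
  | succ r ih =>
    rw [Finset.prod_range_succ, ih]
    have : a + (r + 1) = (a + r) + 1 := by ring
    rw [this, Nat.succ_descFactorial_succ]
    push_cast; ring

lemma genBinom_nat (a r : ℕ) : genBinom (a : ℚ) r = a.choose r := by
  rw [genBinom, prod_sub_cast, Nat.descFactorial_eq_factorial_mul_choose]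
  rw [Nat.cast_mul]
  field_simp

lemma genBinom_neg (a r : ℕ) :
    genBinom (-(a : ℚ) - 1) r = (-1) ^ r * ((a + r).choose r : ℚ) := by
  rw [genBinom]
  have h1 : ∀ p : ℕ, (-(a:ℚ) - 1) - p = (-1) * ((a : ℚ) + 1 + p) := by intro p; ring
  simp only [h1]
  rw [Finset.prod_mul_distrib, Finset.prod_const, Finset.card_range, prod_add_cast,
    Nat.descFactorial_eq_factorial_mul_choose, Nat.cast_mul]
  have := r.factorial_ne_zero
  field_simp

/-- For `m ≡ 2 mod 4` and `j ∈ J`: `α_j(n)` is an integer `z`, all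
`C_{j_k}(α_j(k))` with `k ≤ n-1` are nonzero, and: (i) if `z < 0` then
`P(j) ≠ 0` and `V(j) = v(j) - c(j_n, -z-1)`; (ii) if `0 ≤ z < j_n` then
`P(j) = 0`; (iii) if `z ≥ j_n` then `P(j) ≠ 0` and
`V(j) = v(j) - c(j_n, z - j_n)`. -/
theorem stmt7 (n m : ℕ) (hn : 3 ≤ n) (hm : 1 ≤ m) (hmn : m ≤ 2 ^ (n + 1) - 3)
    (h4 : m % 4 = 2)
    (j : Fin n → ℕ) (hj : inJ n m j) :
    ∃ z : ℤ, alphaF n m j ⟨n - 1, by omega⟩ = (z : ℚ) ∧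
      (∀ K : Fin n, (K : ℕ) < n - 1 → genBinom (alphaF n m j K) (j K) ≠ 0) ∧
      (z < 0 → Pprod n m j ≠ 0 ∧
          V n m j = vsum n j - carries (j ⟨n - 1, by omega⟩) (-z - 1).toNat) ∧
      (0 ≤ z → z < (j ⟨n - 1, by omega⟩ : ℤ) → Pprod n m j = 0) ∧
      ((j ⟨n - 1, by omega⟩ : ℤ) ≤ z → Pprod n m j ≠ 0 ∧
          V n m j = vsum n j -
            carries (j ⟨n - 1, by omega⟩) (z - (j ⟨n - 1, by omega⟩ : ℤ)).toNat) := by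
  obtain ⟨m', hm'⟩ : ∃ m', m = 2 * m' := ⟨m / 2, by omega⟩
  have hm'odd : m' % 2 = 1 := by omega
  set K0 : Fin n := ⟨n - 1, by omega⟩ with hK0d
  have hK0 : (K0 : ℕ) = n - 1 := rfl
  set A : Fin n → ℕ := fun K =>
    ∑ I : Fin n, if (I : ℕ) < (K : ℕ) then 2 ^ ((K : ℕ) - (I : ℕ)) * j I else 0 with hA
  set e : Fin n → ℕ := fun K => n - (K : ℕ) - 1 with he
  set q : Fin n → ℕ → ℤ := fun K p => (m' : ℤ) - 2 ^ (e K) * (A K) - 2 ^ (e K) * p with hq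
  have hfactor : ∀ (K : Fin n) (p : ℕ),
      alphaF n m j K - p = ((q K p : ℤ) : ℚ) / 2 ^ (e K) := by
    intro K p
    have hKn : (K : ℕ) < n := K.isLt
    have hnK : n - (K : ℕ) = e K + 1 := by simp only [he]; omega
    have hAc : ((A K : ℕ) : ℚ)
        = ∑ I : Fin n, if (I : ℕ) < (K : ℕ) then 2 ^ ((K : ℕ) - (I : ℕ)) * (j I : ℚ) else 0 := by
      rw [hA]; push_cast; rfl
    simp only [alphaF, hq]
    rw [← hAc, hnK, hm']
    have h2 : ((2:ℚ)) ^ (e K) ≠ 0 := by positivity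
    push_cast
    field_simp
    ring
  have hodd : ∀ (K : Fin n), (K : ℕ) < n - 1 → ∀ p : ℕ, q K p % 2 = 1 := by
    intro K hK p
    have he1 : 1 ≤ e K := by simp only [he]; omega
    have d1 : (2:ℤ) ∣ 2 ^ (e K) * (A K) := dvd_mul_of_dvd_left (dvd_pow_self 2 (by omega)) _
    have d2 : (2:ℤ) ∣ 2 ^ (e K) * p := dvd_mul_of_dvd_left (dvd_pow_self 2 (by omega)) _
    simp only [hq]
    omega
  have hval : ∀ K : Fin n, (K : ℕ) < n - 1 →
      genBinom (alphaF n m j K) (j K) ≠ 0 ∧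
      padicValRat 2 (genBinom (alphaF n m j K) (j K))
        = -(((n : ℤ) - (K : ℕ)) * j K - sdig (j K)) := by
    intro K hK
    have hprodeq : (∏ p ∈ Finset.range (j K), (alphaF n m j K - p))
        = ∏ p ∈ Finset.range (j K), ((q K p : ℚ) / 2 ^ (e K)) :=
      Finset.prod_congr rfl fun p _ => hfactor K p
    have hne : ∀ p ∈ Finset.range (j K), ((q K p : ℚ) / 2 ^ (e K)) ≠ 0 :=
      fun p _ => odd_div_pow_ne_zero _ (hodd K hK p) _
    have hprodne : (∏ p ∈ Finset.range (j K), (alphaF n m j K - p)) ≠ 0 := by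
      rw [hprodeq]; exact Finset.prod_ne_zero_iff.2 hne
    have hfac : ((Nat.factorial (j K) : ℚ)) ≠ 0 := by
      exact_mod_cast (j K).factorial_ne_zero
    constructor
    · simp only [genBinom]
      exact div_ne_zero hprodne hfac
    · simp only [genBinom]
      rw [padicValRat.div hprodne hfac, hprodeq, padicValRat_prod _ _ hne]
      have hsum : (∑ p ∈ Finset.range (j K), padicValRat 2 ((q K p : ℚ) / 2 ^ (e K)))
          = (j K : ℤ) * (-(e K : ℤ)) := by
        rw [Finset.sum_congr rfl fun p _ => odd_div_pow_val _ (hodd K hK p) _,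
          Finset.sum_const, Finset.card_range, nsmul_eq_mul]
      rw [hsum, padicValRat.of_nat, padicValNat_factorial_eq]
      have h1 : ((j K - sdig (j K) : ℕ) : ℤ) = (j K : ℤ) - sdig (j K) := by
        have := sdig_le (j K); omega
      have h2 : ((e K : ℕ) : ℤ) = (n : ℤ) - (K : ℕ) - 1 := by
        simp only [he]
        have := K.isLt
        omega
      rw [h1, h2]
      ring
  set z : ℤ := (m' : ℤ) - A K0 with hzdef
  have heK0 : e K0 = 0 := by simp only [he, hK0]; omega
  have hz : alphaF n m j K0 = (z : ℚ) := by
    have h := hfactor K0 0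
    simp only [heK0, hq, pow_zero, one_mul, Nat.cast_zero, mul_zero, sub_zero, div_one] at h
    rw [h, hzdef]
  set R := (Finset.univ : Finset (Fin n)).erase K0 with hR
  have herase : ∀ k ∈ R, (k : ℕ) < n - 1 := by
    intro k hk
    have h1 : k ≠ K0 := (Finset.mem_erase.1 hk).1
    have h2 : (k : ℕ) < n := k.isLt
    have h3 : (k : ℕ) ≠ n - 1 := fun h => h1 (Fin.ext (by rw [h, hK0]))
    omega
  have hsplit : Pprod n m j
      = genBinom (alphaF n m j K0) (j K0) * ∏ k ∈ R, genBinom (alphaF n m j k) (j k) := by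
    simp only [Pprod, hR]
    exact (Finset.mul_prod_erase Finset.univ _ (Finset.mem_univ K0)).symm
  have hRne : (∏ k ∈ R, genBinom (alphaF n m j k) (j k)) ≠ 0 :=
    Finset.prod_ne_zero_iff.2 fun k hk => (hval k (herase k hk)).1
  have hRval : padicValRat 2 (∏ k ∈ R, genBinom (alphaF n m j k) (j k)) = - vsum n j := by
    rw [padicValRat_prod _ _ (fun k hk => (hval k (herase k hk)).1)]
    have hv : vsum n j = ∑ k ∈ R, (((n : ℤ) - (k : ℕ)) * j k - sdig (j k)) := by
      simp only [vsum, hR]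
      rw [← Finset.add_sum_erase _ _ (Finset.mem_univ K0)]
      rw [if_neg (by rw [hK0]; omega), zero_add]
      exact Finset.sum_congr rfl fun k hk => if_pos (herase k hk)
    rw [hv, ← Finset.sum_neg_distrib]
    exact Finset.sum_congr rfl fun k hk => (hval k (herase k hk)).2
  refine ⟨z, hz, fun K hK => (hval K hK).1, ?_, ?_, ?_⟩
  · -- case z < 0
    intro hzneg
    set r := j K0 with hr
    set a := (-z - 1).toNat with ha
    have haz : (z : ℚ) = -(a : ℚ) - 1 := by
      have h1 : z = -(a : ℤ) - 1 := by omega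
      rw [h1]; push_cast; ring
    have hgb : genBinom (alphaF n m j K0) r = (-1) ^ r * (((a + r).choose r : ℕ) : ℚ) := by
      rw [hz, haz, genBinom_neg]
    have hchoosene : (((a + r).choose r : ℕ) : ℚ) ≠ 0 :=
      Nat.cast_ne_zero.2 (Nat.choose_pos (Nat.le_add_left r a)).ne'
    have hsgn : ((-1 : ℚ)) ^ r ≠ 0 := by
      rcases neg_one_pow_eq_or ℚ r with h | h <;> rw [h] <;> norm_num
    have hlastne : genBinom (alphaF n m j K0) r ≠ 0 := by
      rw [hgb]; exact mul_ne_zero hsgn hchoosene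
    have hlastval : padicValRat 2 (genBinom (alphaF n m j K0) r) = carries r a := by
      rw [hgb]
      rcases neg_one_pow_eq_or ℚ r with h | h
      · rw [h, one_mul, padicValRat.of_nat, val_choose]
      · rw [h, neg_one_mul, padicValRat.neg, padicValRat.of_nat, val_choose]
    constructor
    · rw [hsplit]; exact mul_ne_zero hlastne hRne
    · show V n m j = vsum n j - (carries r a : ℤ)
      simp only [V]
      rw [hsplit, padicValRat.mul hlastne hRne, hlastval, hRval]
      ring
  · -- case 0 ≤ z < j K0
    intro hz0 hzlt
    have hcast : (z : ℚ) = ((z.toNat : ℕ) : ℚ) := by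
      have h1 : ((z.toNat : ℕ) : ℤ) = z := Int.toNat_of_nonneg hz0
      exact_mod_cast h1.symm
    have h0 : genBinom (alphaF n m j K0) (j K0) = 0 := by
      rw [hz, hcast, genBinom_nat]
      have : z.toNat < j K0 := by omega
      rw [Nat.choose_eq_zero_of_lt this]
      norm_num
    show Pprod n m j = 0
    rw [hsplit, h0, zero_mul]
  · -- case j K0 ≤ z
    intro hge
    have hge' : (j K0 : ℤ) ≤ z := hge
    have hz0 : 0 ≤ z := le_trans (by positivity) hge'
    set r := j K0 with hr
    have hcast : (z : ℚ) = ((z.toNat : ℕ) : ℚ) := by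
      have h1 : ((z.toNat : ℕ) : ℤ) = z := Int.toNat_of_nonneg hz0
      exact_mod_cast h1.symm
    have hle : r ≤ z.toNat := by omega
    have hgb : genBinom (alphaF n m j K0) r = ((z.toNat.choose r : ℕ) : ℚ) := by
      rw [hz, hcast, genBinom_nat]
    have hlastne : genBinom (alphaF n m j K0) r ≠ 0 := by
      rw [hgb]
      exact Nat.cast_ne_zero.2 (Nat.choose_pos hle).ne'
    have hzt : z.toNat = (z.toNat - r) + r := by omega
    have hlastval : padicValRat 2 (genBinom (alphaF n m j K0) r)
        = carries r (z.toNat - r) := by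
      rw [hgb, padicValRat.of_nat]
      conv_lhs => rw [hzt]
      rw [val_choose]
    have htn : (z - (r : ℤ)).toNat = z.toNat - r := by omega
    constructor
    · rw [hsplit]; exact mul_ne_zero hlastne hRne
    · show V n m j = vsum n j - (carries r (z - (r : ℤ)).toNat : ℤ)
      rw [htn]
      simp only [V]
      rw [hsplit, padicValRat.mul hlastne hRne, hlastval, hRval]
      ring
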